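/- Let f : X → X and Γ ⊂ X a finite set. For each n ≥ 1, suppose each fiber of f has at most d elements. Then the collection 𝒥ₙ of subsets U (from any fixed collection 𝒮 of pairwise disjoint subsets of X) satisfying fⁿ(U) ∩ Γ ≠ ∅ and fⁱ(U) ∩ Γ = ∅ for 1 ≤ i ≤ n−1 is finite, of cardinality at most #Γ · dⁿ; consequently the collection of all U ∈ 𝒮 with fⁿ(U) ∩ Γ ≠ ∅ for some n ≥ 1 is countable. -/
import Mathlib


theorem stmt_5 {X : Type*} (f : X → X) (d : ℕ)
    (hfib : ∀ x : X, (f ⁻¹' {x}).Finite ∧ (f ⁻¹' {x}).ncard ≤ d)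
    (Γ : Finset X) (𝒮 : Set (Set X)) (hdisj : 𝒮.Pairwise Disjoint) :
    (∀ n : ℕ, 1 ≤ n →
      {U ∈ 𝒮 | (f^[n] '' U ∩ ↑Γ).Nonempty ∧
          ∀ i, 1 ≤ i → i ≤ n - 1 → f^[i] '' U ∩ ↑Γ = ∅}.Finite ∧
      {U ∈ 𝒮 | (f^[n] '' U ∩ ↑Γ).Nonempty ∧
          ∀ i, 1 ≤ i → i ≤ n - 1 → f^[i] '' U ∩ ↑Γ = ∅}.ncard ≤ Γ.card * d ^ n)
    ∧ {U ∈ 𝒮 | ∃ n, 1 ≤ n ∧ (f^[n] '' U ∩ ↑Γ).Nonempty}.Countable := by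
  classical
  -- preimage of a finite set under f is finite with controlled card
  have step : ∀ A : Set X, A.Finite → (f ⁻¹' A).Finite ∧ (f ⁻¹' A).ncard ≤ A.ncard * d := by
    intro A hA
    have hun : f ⁻¹' A = ⋃ x ∈ hA.toFinset, f ⁻¹' {x} := by
      ext y; simp
    set F : Finset X := hA.toFinset.biUnion (fun x => (hfib x).1.toFinset) with hF
    have hco : f ⁻¹' A = ↑F := by
      rw [hun]; ext y; simp [hF]
    constructor
    · rw [hco]; exact F.finite_toSet
    · rw [hco, Set.ncard_coe_finset]
      calc F.card ≤ ∑ x ∈ hA.toFinset, ((hfib x).1.toFinset).card :=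
            Finset.card_biUnion_le
        _ ≤ hA.toFinset.card * d := by
            apply Finset.sum_le_card_nsmul
            intro x _
            rw [← Set.ncard_eq_toFinset_card (f ⁻¹' {x}) (hfib x).1]
            exact (hfib x).2
        _ = A.ncard * d := by rw [Set.ncard_eq_toFinset_card A hA]
  -- preimage of Γ under f^[n]
  have pre : ∀ n : ℕ, (f^[n] ⁻¹' (Γ : Set X)).Finite ∧
      (f^[n] ⁻¹' (Γ : Set X)).ncard ≤ Γ.card * d ^ n := by
    intro n
    induction n with
    | zero => simp [Set.ncard_coe_finset]
    | succ n ih =>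
      have heq : f^[n+1] ⁻¹' (Γ : Set X) = f ⁻¹' (f^[n] ⁻¹' (Γ : Set X)) := by
        rw [Function.iterate_succ]; rfl
      obtain ⟨h1, h2⟩ := step _ ih.1
      refine ⟨heq ▸ h1, ?_⟩
      rw [heq]
      calc (f ⁻¹' (f^[n] ⁻¹' (Γ : Set X))).ncard ≤ (f^[n] ⁻¹' (Γ : Set X)).ncard * d := h2
        _ ≤ Γ.card * d ^ n * d := Nat.mul_le_mul_right d ih.2
        _ = Γ.card * d ^ (n + 1) := by ring
  -- disjoint family trace lemma
  have key : ∀ S : Set X, S.Finite →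
      {U | U ∈ 𝒮 ∧ (U ∩ S).Nonempty}.Finite ∧
      {U | U ∈ 𝒮 ∧ (U ∩ S).Nonempty}.ncard ≤ S.ncard := by
    intro S hS
    set T := {U | U ∈ 𝒮 ∧ (U ∩ S).Nonempty} with hT
    rcases S.eq_empty_or_nonempty with rfl | ⟨x0, hx0⟩
    · have : T = ∅ := by
        ext U; simp [hT]
      simp [this]
    · set g : Set X → X := fun U => if h : (U ∩ S).Nonempty then h.choose else x0 with hg
      have hgmem : ∀ U ∈ T, g U ∈ U ∩ S := by
        intro U hU
        simp only [hg, dif_pos hU.2]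
        exact hU.2.choose_spec
      have hinj : Set.InjOn g T := by
        intro U hU V hV hUV
        by_contra hne
        have hd := hdisj hU.1 hV.1 hne
        have h1 := hgmem U hU
        have h2 := hgmem V hV
        rw [hUV] at h1
        exact (hd.ne_of_mem h1.1 h2.1) rfl
      have himg : g '' T ⊆ S := by
        rintro _ ⟨U, hU, rfl⟩
        exact (hgmem U hU).2
      have hTfin : T.Finite := Set.Finite.of_finite_image (hS.subset himg) hinj
      refine ⟨hTfin, ?_⟩
      calc T.ncard = (g '' T).ncard := (Set.ncard_image_of_injOn hinj).symm
        _ ≤ S.ncard := Set.ncard_le_ncard himg hS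
  -- translation: image condition ↔ preimage condition
  have trans : ∀ (n : ℕ) (U : Set X),
      (f^[n] '' U ∩ ↑Γ).Nonempty ↔ (U ∩ f^[n] ⁻¹' (Γ : Set X)).Nonempty := by
    intro n U
    constructor
    · rintro ⟨y, ⟨x, hxU, rfl⟩, hyΓ⟩
      exact ⟨x, hxU, hyΓ⟩
    · rintro ⟨x, hxU, hx⟩
      exact ⟨f^[n] x, ⟨x, hxU, rfl⟩, hx⟩
  -- per-n bound (for the level sets)
  have perN : ∀ n : ℕ, {U | U ∈ 𝒮 ∧ (f^[n] '' U ∩ ↑Γ).Nonempty}.Finite ∧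
      {U | U ∈ 𝒮 ∧ (f^[n] '' U ∩ ↑Γ).Nonempty}.ncard ≤ Γ.card * d ^ n := by
    intro n
    have heq : {U | U ∈ 𝒮 ∧ (f^[n] '' U ∩ ↑Γ).Nonempty}
        = {U | U ∈ 𝒮 ∧ (U ∩ f^[n] ⁻¹' (Γ : Set X)).Nonempty} := by
      ext U; simp [trans n U]
    obtain ⟨hf1, hf2⟩ := key _ (pre n).1
    rw [heq]
    exact ⟨hf1, hf2.trans (pre n).2⟩
  constructor
  · intro n _
    have hsub : {U ∈ 𝒮 | (f^[n] '' U ∩ ↑Γ).Nonempty ∧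
          ∀ i, 1 ≤ i → i ≤ n - 1 → f^[i] '' U ∩ ↑Γ = ∅}
        ⊆ {U | U ∈ 𝒮 ∧ (f^[n] '' U ∩ ↑Γ).Nonempty} := by
      rintro U ⟨h1, h2, _⟩
      exact ⟨h1, h2⟩
    exact ⟨(perN n).1.subset hsub,
      le_trans (Set.ncard_le_ncard hsub (perN n).1) (perN n).2⟩
  · have heq : {U ∈ 𝒮 | ∃ n, 1 ≤ n ∧ (f^[n] '' U ∩ ↑Γ).Nonempty}
        = ⋃ n : ℕ, {U | U ∈ 𝒮 ∧ (f^[n+1] '' U ∩ ↑Γ).Nonempty} := by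
      ext U
      simp only [Set.mem_setOf_eq, Set.mem_iUnion]
      constructor
      · rintro ⟨h1, n, hn, h2⟩
        refine ⟨n - 1, h1, ?_⟩
        rwa [Nat.sub_add_cancel hn]
      · rintro ⟨n, h1, h2⟩
        exact ⟨h1, n + 1, Nat.succ_le_succ (Nat.zero_le n), h2⟩
    rw [heq]
    exact Set.countable_iUnion (fun n => ((perN (n+1)).1).countable)
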